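/- Let h be a continuous real-valued function on the set of pure states of a finite-dimensional Hilbert space ℋ⊗ℋ with dim ℋ = d, and let ρ be any density operator on ℋ⊗ℋ. Then the infimum over finite pure-state decompositions ρ = ∑ᵢ pᵢ|ψᵢ⟩⟨ψᵢ| of ∑ᵢ pᵢ h(|ψᵢ⟩⟨ψᵢ|) is attained, and the optimal ensemble can be chosen to have at most d⁴ + 1 elements. -/

import Mathlib

open scoped Matrix Kronecker ComplexOrder

noncomputable section

namespace QEMD

variable {m n : Type*} [Fintype m] [Fintype n] [DecidableEq m] [DecidableEq n]

/-- Total square root: the PSD square root if `A` is PSD, else `0`. -/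
def msqrt (A : Matrix n n ℂ) : Matrix n n ℂ :=
  letI := Classical.dec A.PosSemidef
  if h : A.PosSemidef then
    (h.1.eigenvectorUnitary : Matrix n n ℂ) *
      Matrix.diagonal ((↑) ∘ (Real.sqrt ∘ h.1.eigenvalues)) *
      (star (h.1.eigenvectorUnitary : Matrix n n ℂ)) else 0

/-- Trace norm `‖A‖₁ = Tr √(AᴴA)`. -/
def traceNorm (A : Matrix n n ℂ) : ℝ :=
  ((msqrt (Aᴴ * A)).trace).re

/-- Trace distance `D(ρ,σ) = ½‖ρ-σ‖₁`. -/
def traceDist (ρ σ : Matrix n n ℂ) : ℝ := traceNorm (ρ - σ) / 2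

/-- Fidelity `F(ρ,σ) = Tr √(√ρ σ √ρ)`. -/
def fidelity (ρ σ : Matrix n n ℂ) : ℝ :=
  ((msqrt (msqrt ρ * σ * msqrt ρ)).trace).re

/-- Density matrix predicate. -/
def IsDensity (ρ : Matrix n n ℂ) : Prop := ρ.PosSemidef ∧ ρ.trace = 1

/-- Projector `|v⟩⟨v|` onto a vector. -/
def proj (v : n → ℂ) : Matrix n n ℂ := Matrix.of fun i j => v i * star (v j)

/-- Partial trace over the first (left) factor. -/
def traceLeft (ρ : Matrix (m × n) (m × n) ℂ) : Matrix n n ℂ :=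
  Matrix.of fun i j => ∑ k, ρ (k, i) (k, j)

/-- Partial trace over the second (right) factor. -/
def traceRight (ρ : Matrix (m × n) (m × n) ℂ) : Matrix m m ℂ :=
  Matrix.of fun i j => ∑ k, ρ (i, k) (j, k)

/-- The swap operator `S|αβ⟩ = |βα⟩` on `ℂ^d ⊗ ℂ^d`. -/
def swap (d : ℕ) : Matrix (Fin d × Fin d) (Fin d × Fin d) ℂ :=
  Matrix.of fun p q => if p.1 = q.2 ∧ p.2 = q.1 then 1 else 0

/-- Projection onto the symmetric subspace, `P_s = (I + S)/2`. -/
def Psym (d : ℕ) : Matrix (Fin d × Fin d) (Fin d × Fin d) ℂ := (2:ℂ)⁻¹ • (1 + swap d)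

/-- Projection onto the antisymmetric subspace, `P_as = (I - S)/2`. -/
def Pasym (d : ℕ) : Matrix (Fin d × Fin d) (Fin d × Fin d) ℂ := (2:ℂ)⁻¹ • (1 - swap d)

/-- `ρAB` is a quantum coupling of `ρA` and `ρB`. -/
def IsCoupling (ρAB : Matrix (m × n) (m × n) ℂ) (ρA : Matrix m m ℂ)
    (ρB : Matrix n n ℂ) : Prop :=
  IsDensity ρAB ∧ traceRight ρAB = ρA ∧ traceLeft ρAB = ρB

/-- The maximally entangled vector `|Φ⟩ = (1/√d) ∑ᵢ |i⟩|i⟩`. -/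
def maxEnt (d : ℕ) : Fin d × Fin d → ℂ :=
  fun p => if p.1 = p.2 then ((1 / Real.sqrt d : ℝ) : ℂ) else 0


/-! ### Auxiliary material for `stmt19` -/

section Stmt19Aux

variable {ι : Type*} [Fintype ι] [DecidableEq ι]

lemma proj_conjTranspose' (ψ : ι → ℂ) : (proj ψ)ᴴ = proj ψ := by
  ext i j
  simp [proj, Matrix.conjTranspose_apply, mul_comm]

lemma trace_proj' (ψ : ι → ℂ) : (proj ψ).trace = ((∑ q, ‖ψ q‖ ^ 2 : ℝ) : ℂ) := by
  simp only [Matrix.trace, Matrix.diag, proj, Matrix.of_apply, Complex.star_def,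
    Complex.mul_conj']
  push_cast
  rfl

lemma real_smul_matrix (r : ℝ) (A : Matrix ι ι ℂ) : r • A = (r : ℂ) • A := by
  ext i j
  simp [Matrix.smul_apply, Complex.real_smul]

lemma continuous_proj' : Continuous fun ψ : ι → ℂ => proj ψ := by
  apply continuous_matrix
  intro i j
  exact (continuous_apply i).mul ((continuous_apply j).star)

/-- Padding a finite family to a longer one with a default value. -/
def padf {α : Type*} (m N : ℕ) (x : Fin m → α) (a : α) : Fin N → α :=
  fun i => if hi : (i : ℕ) < m then x ⟨i, hi⟩ else a

lemma sum_padf {M α : Type*} [AddCommMonoid M] {m N : ℕ} (hmN : m ≤ N) (x : Fin m → α)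
    (a : α) (g : α → M) (hga : g a = 0) :
    ∑ i : Fin N, g (padf m N x a i) = ∑ i : Fin m, g (x i) := by
  have h1 : ∀ i : Fin N,
      g (padf m N x a i) = (fun t : ℕ => if ht : t < m then g (x ⟨t, ht⟩) else 0) (i : ℕ) := by
    intro i
    by_cases hi : (i : ℕ) < m <;> simp [padf, hi, hga]
  set F : ℕ → M := fun t => if ht : t < m then g (x ⟨t, ht⟩) else 0 with hF
  have h2 : ∑ i : Fin N, g (padf m N x a i) = ∑ t ∈ Finset.range N, F t := by
    rw [← Fin.sum_univ_eq_sum_range F N]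
    exact Finset.sum_congr rfl fun i _ => h1 i
  have h3 : ∑ t ∈ Finset.range N, F t = ∑ t ∈ Finset.range m, F t :=
    (Finset.sum_subset (Finset.range_subset_range.2 hmN)
      (fun t _ ht => by simp [hF, Finset.mem_range.not.1 ht])).symm
  have h4 : ∑ t ∈ Finset.range m, F t = ∑ i : Fin m, g (x i) := by
    rw [← Fin.sum_univ_eq_sum_range F m]
    exact Finset.sum_congr rfl fun i _ => by simp [hF, i.2]
  rw [h2, h3, h4]

lemma sum_shrinkf {M : Type*} [AddCommMonoid M] {N : ℕ} (p : Fin N → ℝ) (g : Fin N → M)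
    (hg : ∀ i, p i = 0 → g i = 0) :
    ∑ j : Fin (Finset.univ.filter (fun i => p i ≠ 0)).card,
        g ((Finset.univ.filter (fun i => p i ≠ 0)).equivFin.symm j) = ∑ i, g i := by
  rw [Equiv.sum_comp (Finset.univ.filter (fun i => p i ≠ 0)).equivFin.symm
    (fun x : (Finset.univ.filter (fun i => p i ≠ 0) : Finset (Fin N)) => g x)]
  rw [Finset.sum_coe_sort]
  refine Finset.sum_filter_of_ne fun i _ hgi => ?_
  exact fun hpi => hgi (hg i hpi)

/-- Spectral decomposition of a density matrix into pure states. -/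
lemma density_decomp (ρ : Matrix ι ι ℂ) (hρ : IsDensity ρ) :
    ∃ (p : ι → ℝ) (ψ : ι → ι → ℂ), (∀ i, 0 ≤ p i) ∧ (∑ i, p i = 1) ∧
      (∀ i, ∑ q, ‖ψ i q‖ ^ 2 = 1) ∧ ρ = ∑ i, (p i : ℂ) • proj (ψ i) := by
  obtain ⟨hpsd, htr⟩ := hρ
  have hherm : ρ.IsHermitian := hpsd.1
  set U : Matrix ι ι ℂ := (hherm.eigenvectorUnitary : Matrix ι ι ℂ) with hU
  have hunit : ∀ k, ∑ q, ‖U q k‖ ^ 2 = 1 := by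
    intro k
    have h1 : star U * U = 1 := hherm.eigenvectorUnitary.2.1
    have h2 : (star U * U) k k = (1 : Matrix ι ι ℂ) k k := by rw [h1]
    rw [Matrix.mul_apply] at h2
    simp only [Matrix.star_apply, Matrix.one_apply_eq] at h2
    have h3 : ∀ q, star (U q k) * U q k = ((‖U q k‖ ^ 2 : ℝ) : ℂ) := by
      intro q
      rw [Complex.star_def, Complex.conj_mul']
      push_cast; ring
    rw [Finset.sum_congr rfl fun q _ => h3 q] at h2
    exact_mod_cast h2
  have hdec : ρ = ∑ k, (hherm.eigenvalues k : ℂ) • proj (fun q => U q k) := by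
    ext i j
    have hst : ρ = (hherm.eigenvectorUnitary : Matrix ι ι ℂ) *
        Matrix.diagonal (RCLike.ofReal ∘ hherm.eigenvalues) *
        star (hherm.eigenvectorUnitary : Matrix ι ι ℂ) := hherm.spectral_theorem
    have h2 := congrFun (congrFun hst i) j
    simp only [Matrix.mul_apply, Matrix.diagonal_apply, Matrix.star_apply,
      Function.comp_apply, ite_mul, zero_mul, mul_ite, mul_zero, Finset.sum_ite_eq,
      Finset.sum_ite_eq', Finset.mem_univ, if_true] at h2
    rw [Matrix.sum_apply, h2]
    refine Finset.sum_congr rfl fun k _ => ?_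
    simp only [Matrix.smul_apply, proj, Matrix.of_apply, smul_eq_mul]
    have hco : (RCLike.ofReal (hherm.eigenvalues k) : ℂ) = ((hherm.eigenvalues k : ℝ) : ℂ) := rfl
    rw [hco]
    ring
  refine ⟨hherm.eigenvalues, fun k q => U q k, fun k => hpsd.eigenvalues_nonneg k, ?_, hunit, hdec⟩
  · have h4 := congrArg Matrix.trace hdec
    rw [Matrix.trace_sum] at h4
    have h5 : ∀ k ∈ (Finset.univ : Finset ι),
        ((hherm.eigenvalues k : ℂ) • proj (fun q => U q k)).trace = (hherm.eigenvalues k : ℂ) := by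
      intro k _
      rw [Matrix.trace_smul, trace_proj', hunit k]
      simp
    rw [Finset.sum_congr rfl h5, htr] at h4
    exact_mod_cast h4.symm


section Dim

variable [Nonempty ι]

/-- Any affinely independent family of pairs (Hermitian trace-one matrix, real number)
has cardinality at most `(card ι)^2 + 1`. -/
lemma card_le_of_affineIndependent {κ : Type} [Fintype κ]
    (z : κ → Matrix ι ι ℂ × ℝ)
    (hz : ∀ i, ((z i).1)ᴴ = (z i).1 ∧ ((z i).1).trace = 1)
    (hai : AffineIndependent ℝ z) :
    Fintype.card κ ≤ Fintype.card ι ^ 2 + 1 := by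
  rcases isEmpty_or_nonempty κ with hk | hk
  · simp [Fintype.card_eq_zero]
  set q₀ : ι := Classical.arbitrary ι with hq₀
  set V₀ : Submodule ℝ (Matrix ι ι ℂ × ℝ) :=
    { carrier := {x | (x.1)ᴴ = x.1 ∧ (x.1).trace = 0}
      add_mem' := by
        rintro a b ⟨ha1, ha2⟩ ⟨hb1, hb2⟩
        refine ⟨?_, ?_⟩
        · simp only [Prod.fst_add, Matrix.conjTranspose_add, ha1, hb1]
        · simp only [Prod.fst_add, Matrix.trace_add, ha2, hb2, add_zero]
      zero_mem' := by
        refine ⟨?_, ?_⟩ <;> simp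
      smul_mem' := by
        rintro c a ⟨ha1, ha2⟩
        refine ⟨?_, ?_⟩
        · simp only [Prod.smul_fst, Matrix.conjTranspose_smul, star_trivial, ha1]
        · simp only [Prod.smul_fst, Matrix.trace_smul, ha2, smul_zero] } with hV₀
  set f : V₀ →ₗ[ℝ] (({q : ι × ι // q ≠ (q₀, q₀)} → ℝ) × ℝ) :=
    { toFun := fun x =>
        (fun q => ((x : Matrix ι ι ℂ × ℝ).1 q.1.1 q.1.2).re
          + ((x : Matrix ι ι ℂ × ℝ).1 q.1.1 q.1.2).im, (x : Matrix ι ι ℂ × ℝ).2)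
      map_add' := by
        intro a b
        refine Prod.ext (funext fun q => ?_) ?_ <;>
          simp only [Submodule.coe_add, Prod.fst_add, Prod.snd_add, Matrix.add_apply,
            Prod.mk_add_mk, Pi.add_apply, Complex.add_re, Complex.add_im] <;> ring
      map_smul' := by
        intro c a
        refine Prod.ext (funext fun q => ?_) ?_ <;>
          simp only [SetLike.val_smul, Prod.smul_fst, Prod.smul_snd, Matrix.smul_apply,
            RingHom.id_apply, Prod.smul_mk, Pi.smul_apply, Complex.smul_re, Complex.smul_im,
            smul_eq_mul] <;> ring } with hf
  have h0 : ∀ x : V₀, f x = 0 → x = 0 := by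
    intro x hx0
    obtain ⟨hxH, hxtr⟩ := x.2
    have h1 : (fun q : {q : ι × ι // q ≠ (q₀, q₀)} =>
        ((x : Matrix ι ι ℂ × ℝ).1 q.1.1 q.1.2).re
          + ((x : Matrix ι ι ℂ × ℝ).1 q.1.1 q.1.2).im) = 0 := congrArg Prod.fst hx0
    have h2 : (x : Matrix ι ι ℂ × ℝ).2 = 0 := congrArg Prod.snd hx0
    set A := (x : Matrix ι ι ℂ × ℝ).1 with hA
    have hoff : ∀ i j : ι, (i, j) ≠ (q₀, q₀) → A i j = 0 := by
      intro i j hne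
      have e1 := congrFun h1 ⟨(i, j), hne⟩
      have hne' : ((j, i) : ι × ι) ≠ (q₀, q₀) := by
        intro hc
        apply hne
        rw [Prod.mk.injEq] at hc ⊢
        exact ⟨hc.2, hc.1⟩
      have e2 := congrFun h1 ⟨(j, i), hne'⟩
      simp only [Pi.zero_apply] at e1 e2
      have hsym : A j i = star (A i j) := by
        have h3 := congrFun (congrFun hxH j) i
        rw [Matrix.conjTranspose_apply] at h3
        exact h3.symm
      rw [hsym] at e2
      simp only [Complex.star_def, Complex.conj_re, Complex.conj_im] at e2
      have hre : (A i j).re = 0 := by linarith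
      have him : (A i j).im = 0 := by linarith
      exact Complex.ext hre him
    have hAz : A = 0 := by
      ext i j
      by_cases hc : ((i, j) : ι × ι) = (q₀, q₀)
      · rw [Prod.mk.injEq] at hc
        obtain ⟨rfl, rfl⟩ := hc
        have hsum : ∑ k, A k k = 0 := hxtr
        rw [Finset.sum_eq_single q₀ (fun k _ hk => hoff k k (by simp [hk]))
          (fun h => absurd (Finset.mem_univ _) h)] at hsum
        simpa using hsum
      · simpa using hoff i j hc
    have : (x : Matrix ι ι ℂ × ℝ) = 0 := Prod.ext hAz h2
    exact Subtype.ext this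
  have hinj : Function.Injective f :=
    LinearMap.ker_eq_bot.mp (LinearMap.ker_eq_bot'.mpr h0)
  have hcard1 : 1 ≤ Fintype.card ι ^ 2 :=
    Nat.one_le_iff_ne_zero.mpr (pow_ne_zero _ Fintype.card_pos.ne')
  have hTrank : Module.finrank ℝ (({q : ι × ι // q ≠ (q₀, q₀)} → ℝ) × ℝ)
      = (Fintype.card ι ^ 2 - 1) + 1 := by
    rw [Module.finrank_prod, Module.finrank_pi, Module.finrank_self]
    congr 1
    have hsub : Fintype.card {q : ι × ι // q ≠ (q₀, q₀)}
        = Fintype.card (ι × ι) - Fintype.card {q : ι × ι // q = (q₀, q₀)} :=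
      Fintype.card_subtype_compl _
    rw [hsub, Fintype.card_subtype_eq, Fintype.card_prod, ← pow_two]
  have hV₀rank : Module.finrank ℝ V₀ ≤ Fintype.card ι ^ 2 := by
    have h4 := LinearMap.finrank_le_finrank_of_injective hinj
    rw [hTrank] at h4
    omega
  have hc : Fintype.card κ = (Fintype.card κ - 1) + 1 :=
    (Nat.succ_pred_eq_of_pos Fintype.card_pos).symm
  have h6 := hai.finrank_vectorSpan hc
  have hle : vectorSpan ℝ (Set.range z) ≤ V₀ := by
    rw [vectorSpan_def, Submodule.span_le]
    rintro x hx
    rw [Set.mem_vsub] at hx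
    obtain ⟨a, ha, b, hb, rfl⟩ := hx
    obtain ⟨i, rfl⟩ := ha
    obtain ⟨j, rfl⟩ := hb
    refine ⟨?_, ?_⟩
    · simp only [vsub_eq_sub, Prod.fst_sub, Matrix.conjTranspose_sub,
        (hz i).1, (hz j).1]
    · simp only [vsub_eq_sub, Prod.fst_sub, Matrix.trace_sub,
        (hz i).2, (hz j).2, sub_self]
  have h7 : Module.finrank ℝ (vectorSpan ℝ (Set.range z)) ≤ Module.finrank ℝ V₀ :=
    Submodule.finrank_mono hle
  omega

end Dim

end Stmt19Aux

theorem stmt19 (d : ℕ) (hd : 0 < d)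
    (h : Matrix (Fin d × Fin d) (Fin d × Fin d) ℂ → ℝ)
    (hcont : ContinuousOn h
      {A | ∃ ψ : Fin d × Fin d → ℂ, (∑ p, ‖ψ p‖ ^ 2 = 1) ∧ A = proj ψ})
    (ρ : Matrix (Fin d × Fin d) (Fin d × Fin d) ℂ) (hρ : IsDensity ρ) :
    ∃ (n : ℕ) (p : Fin n → ℝ) (ψ : Fin n → (Fin d × Fin d → ℂ)),
      n ≤ d ^ 4 + 1 ∧ (∀ i, 0 < p i) ∧ (∑ i, p i = 1) ∧
      (∀ i, ∑ q, ‖ψ i q‖ ^ 2 = 1) ∧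
      ρ = ∑ i, (p i : ℂ) • proj (ψ i) ∧
      (∑ i, p i * h (proj (ψ i)))
        = sInf {x : ℝ |
            ∃ (n' : ℕ) (p' : Fin n' → ℝ) (ψ' : Fin n' → (Fin d × Fin d → ℂ)),
              (∀ i, 0 < p' i) ∧ (∑ i, p' i = 1) ∧
              (∀ i, ∑ q, ‖ψ' i q‖ ^ 2 = 1) ∧
              ρ = ∑ i, (p' i : ℂ) • proj (ψ' i) ∧
              x = ∑ i, p' i * h (proj (ψ' i))} := by
    classical
  haveI hne : Nonempty (Fin d × Fin d) := ⟨(⟨0, hd⟩, ⟨0, hd⟩)⟩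
  set N : ℕ := d ^ 4 + 1 with hNdef
  set S : Set ℝ := {x : ℝ |
      ∃ (n' : ℕ) (p' : Fin n' → ℝ) (ψ' : Fin n' → (Fin d × Fin d → ℂ)),
        (∀ i, 0 < p' i) ∧ (∑ i, p' i = 1) ∧
        (∀ i, ∑ q, ‖ψ' i q‖ ^ 2 = 1) ∧
        ρ = ∑ i, (p' i : ℂ) • proj (ψ' i) ∧
        x = ∑ i, p' i * h (proj (ψ' i))} with hS
  set K : Set ((Fin N → ℝ) × (Fin N → (Fin d × Fin d → ℂ))) :=
    {z | (∀ i, 0 ≤ z.1 i) ∧ (∑ i, z.1 i = 1) ∧ (∀ i, ∑ q, ‖z.2 i q‖ ^ 2 = 1) ∧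
      ρ = ∑ i, (z.1 i : ℂ) • proj (z.2 i)} with hK
  set f : ((Fin N → ℝ) × (Fin N → (Fin d × Fin d → ℂ))) → ℝ :=
    fun z => ∑ i, z.1 i * h (proj (z.2 i)) with hf
  -- Step 1: any ensemble of size ≤ N gives an element of K with the same value
  have hmemK : ∀ (m : ℕ), m ≤ N → ∀ (p : Fin m → ℝ) (ψ : Fin m → (Fin d × Fin d → ℂ)),
      (∀ i, 0 ≤ p i) → (∑ i, p i = 1) → (∀ i, ∑ q, ‖ψ i q‖ ^ 2 = 1) →
      (ρ = ∑ i, (p i : ℂ) • proj (ψ i)) →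
      ∃ z ∈ K, f z = ∑ i, p i * h (proj (ψ i)) := by
    intro m hm p ψ hp0 hp1 hψu hρm
    set a : ℝ × (Fin d × Fin d → ℂ) :=
      (0, fun q => if q = (⟨0, hd⟩, ⟨0, hd⟩) then 1 else 0) with ha
    set x : Fin m → ℝ × (Fin d × Fin d → ℂ) := fun i => (p i, ψ i) with hx
    refine ⟨(fun i => (padf m N x a i).1, fun i => (padf m N x a i).2), ⟨?_, ?_, ?_, ?_⟩, ?_⟩
    · intro i
      by_cases hi : (i : ℕ) < m
      · simpa [padf, hi, hx] using hp0 ⟨i, hi⟩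
      · simp [padf, hi, ha]
    · have := sum_padf hm x a (fun t => t.1) rfl
      simpa [hx] using this.trans hp1
    · intro i
      by_cases hi : (i : ℕ) < m
      · simpa [padf, hi, hx] using hψu ⟨i, hi⟩
      · simp only [padf, hi, dif_neg, not_false_iff, ha]
        rw [Finset.sum_eq_single ((⟨0, hd⟩, ⟨0, hd⟩) : Fin d × Fin d)
          (fun q _ hq => by simp [hq]) (fun hmem => absurd (Finset.mem_univ _) hmem)]
        simp
    · have := sum_padf hm x a (fun t => (t.1 : ℂ) • proj t.2) (by simp [ha])
      rw [hρm]
      simpa [hx] using this.symm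
    · have := sum_padf hm x a (fun t => t.1 * h (proj t.2)) (by simp [ha])
      simpa [hf, hx] using this
  -- Step 2: Carathéodory reduction: every value in S is attained on K
  have hQsub : ∀ x ∈ S, ∃ z ∈ K, f z = x := by
    intro x hx
    obtain ⟨n', p', ψ', hp'pos, hp'sum, hψ', hρ', hxval⟩ := hx
    set Q : Set (Matrix (Fin d × Fin d) (Fin d × Fin d) ℂ × ℝ) :=
      {y | ∃ ψ : Fin d × Fin d → ℂ, (∑ q, ‖ψ q‖ ^ 2 = 1) ∧
        y = (proj ψ, h (proj ψ))} with hQdef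
    have hmem : (ρ, x) ∈ convexHull ℝ Q := by
      have hcm := Finset.centerMass_mem_convexHull (Finset.univ : Finset (Fin n'))
        (s := Q) (w := p') (fun i _ => (hp'pos i).le) (by rw [hp'sum]; exact one_pos)
        (z := fun i => (proj (ψ' i), h (proj (ψ' i))))
        (fun i _ => show _ ∈ Q from ⟨ψ' i, hψ' i, rfl⟩)
      have hsum : (Finset.univ : Finset (Fin n')).centerMass p'
          (fun i => (proj (ψ' i), h (proj (ψ' i)))) = (ρ, x) := by
        rw [Finset.centerMass_eq_of_sum_1 _ _ hp'sum]
        refine Prod.ext ?_ ?_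
        · rw [Prod.fst_sum, hρ']
          refine Finset.sum_congr rfl fun i _ => ?_
          rw [Prod.smul_mk]
          exact (real_smul_matrix _ _).symm
        · rw [Prod.snd_sum, hxval]
          refine Finset.sum_congr rfl fun i _ => by simp [smul_eq_mul]
      rwa [hsum] at hcm
    rw [convexHull_eq_union] at hmem
    simp only [Set.mem_iUnion] at hmem
    obtain ⟨t, hts, hai, hmt⟩ := hmem
    have hcard : t.card ≤ N := by
      have hherms : ∀ y : {y // y ∈ t}, (((y : Matrix (Fin d × Fin d) (Fin d × Fin d) ℂ × ℝ)).1ᴴ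
          = ((y : Matrix (Fin d × Fin d) (Fin d × Fin d) ℂ × ℝ)).1)
          ∧ ((y : Matrix (Fin d × Fin d) (Fin d × Fin d) ℂ × ℝ)).1.trace = 1 := by
        intro y
        obtain ⟨ψ, hψu2, hy⟩ := hts y.2
        constructor
        · rw [hy]; exact proj_conjTranspose' ψ
        · rw [hy]
          show (proj ψ).trace = 1
          rw [trace_proj', hψu2]; norm_num
      have h1 := card_le_of_affineIndependent (κ := {y // y ∈ t})
        (fun y => (y : Matrix (Fin d × Fin d) (Fin d × Fin d) ℂ × ℝ)) hherms hai
      have h2 : Fintype.card (Fin d × Fin d) ^ 2 = d ^ 4 := by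
        simp only [Fintype.card_prod, Fintype.card_fin]; ring
      rw [Fintype.card_coe, h2] at h1
      exact h1
    rw [Finset.convexHull_eq] at hmt
    obtain ⟨w, hw0, hw1, hwx⟩ := hmt
    rw [Finset.centerMass_eq_of_sum_1 _ _ hw1] at hwx
    have hch : ∀ y : {y // y ∈ t}, ∃ ψ : Fin d × Fin d → ℂ, (∑ q, ‖ψ q‖ ^ 2 = 1) ∧
        (y : Matrix (Fin d × Fin d) (Fin d × Fin d) ℂ × ℝ) = (proj ψ, h (proj ψ)) :=
      fun y => hts y.2
    choose Ψ hΨu hΨeq using hch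
    set e := t.equivFin.symm with he
    set m := t.card with hmdef
    set pm : Fin m → ℝ := fun j => w (e j) with hpm
    set ψm : Fin m → (Fin d × Fin d → ℂ) := fun j => Ψ (e j) with hψm
    have hpm1 : ∑ j, pm j = 1 := by
      rw [hpm]
      rw [Equiv.sum_comp e (fun y : {y // y ∈ t} => w (y : Matrix (Fin d × Fin d) (Fin d × Fin d) ℂ × ℝ))]
      rw [Finset.sum_coe_sort t w]
      exact hw1
    have hfsteq : ρ = ∑ j, (pm j : ℂ) • proj (ψm j) := by
      have h1 := congrArg Prod.fst hwx
      rw [Prod.fst_sum] at h1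
      have h2 : (∑ y ∈ t, (w y • id y).1)
          = ∑ y : {y // y ∈ t}, w (y : _) • proj (Ψ y) := by
        rw [← Finset.sum_coe_sort t (fun y => (w y • id y).1)]
        refine Finset.sum_congr rfl fun y _ => ?_
        rw [id, Prod.smul_fst, congrArg Prod.fst (hΨeq y)]
      rw [h2] at h1
      rw [← Equiv.sum_comp e (fun y : {y // y ∈ t} => w (y : _) • proj (Ψ y))] at h1
      have h1' : ∑ j : Fin m, w (e j) • proj (Ψ (e j)) = ρ := h1
      rw [← h1']
      exact Finset.sum_congr rfl fun j _ => (real_smul_matrix _ _)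
    have hsndeq : x = ∑ j, pm j * h (proj (ψm j)) := by
      have h1 := congrArg Prod.snd hwx
      rw [Prod.snd_sum] at h1
      have h2 : (∑ y ∈ t, (w y • id y).2)
          = ∑ y : {y // y ∈ t}, w (y : _) * h (proj (Ψ y)) := by
        rw [← Finset.sum_coe_sort t (fun y => (w y • id y).2)]
        refine Finset.sum_congr rfl fun y _ => ?_
        rw [id, Prod.smul_snd, congrArg Prod.snd (hΨeq y)]
        simp [smul_eq_mul]
      rw [h2] at h1
      rw [← Equiv.sum_comp e (fun y : {y // y ∈ t} => w (y : _) * h (proj (Ψ y)))] at h1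
      have h1' : ∑ j : Fin m, w (e j) * h (proj (Ψ (e j))) = x := h1
      exact h1'.symm
    obtain ⟨z, hzK, hfz⟩ := hmemK m hcard pm ψm
      (fun j => hw0 _ (e j).2) hpm1 (fun j => hΨu (e j)) hfsteq
    exact ⟨z, hzK, by rw [hfz, ← hsndeq]⟩
  -- Step 3: K is nonempty
  have hKne : K.Nonempty := by
    obtain ⟨p0, ψ0, hp00, hp01, hψ0u, hρ0⟩ := density_decomp ρ hρ
    set m0 := Fintype.card (Fin d × Fin d) with hm0
    have hm0N : m0 ≤ N := by
      rw [hm0]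
      simp only [Fintype.card_prod, Fintype.card_fin]
      have h1 : d * d = d ^ 2 := by ring
      have h2 : d ^ 2 ≤ d ^ 4 := Nat.pow_le_pow_right hd (by norm_num)
      omega
    set eqv : Fin m0 ≃ (Fin d × Fin d) := (Fintype.equivFin (Fin d × Fin d)).symm with heqv
    obtain ⟨z, hzK, _⟩ := hmemK m0 hm0N (fun j => p0 (eqv j)) (fun j => ψ0 (eqv j))
      (fun j => hp00 _) (by rw [Equiv.sum_comp eqv p0]; exact hp01)
      (fun j => hψ0u _)
      (by rw [hρ0, ← Equiv.sum_comp eqv (fun k => (p0 k : ℂ) • proj (ψ0 k))])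
    exact ⟨z, hzK⟩
  -- Step 4: K is compact and f is continuous on K
  have hc1 : ∀ i : Fin N, Continuous fun z : (Fin N → ℝ) × (Fin N → (Fin d × Fin d → ℂ)) =>
      z.1 i := fun i => (continuous_apply i).comp continuous_fst
  have hc2 : ∀ i : Fin N, Continuous fun z : (Fin N → ℝ) × (Fin N → (Fin d × Fin d → ℂ)) =>
      z.2 i := fun i => (continuous_apply i).comp continuous_snd
  have hKclosed : IsClosed K := by
    rw [hK]
    have e1 : IsClosed {z : (Fin N → ℝ) × (Fin N → (Fin d × Fin d → ℂ)) |
        ∀ i, 0 ≤ z.1 i} := by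
      rw [Set.setOf_forall]
      exact isClosed_iInter fun i => isClosed_le continuous_const (hc1 i)
    have e2 : IsClosed {z : (Fin N → ℝ) × (Fin N → (Fin d × Fin d → ℂ)) |
        ∑ i, z.1 i = 1} :=
      isClosed_eq (continuous_finset_sum _ fun i _ => hc1 i) continuous_const
    have e3 : IsClosed {z : (Fin N → ℝ) × (Fin N → (Fin d × Fin d → ℂ)) |
        ∀ i, ∑ q, ‖z.2 i q‖ ^ 2 = 1} := by
      rw [Set.setOf_forall]
      refine isClosed_iInter fun i => isClosed_eq ?_ continuous_const
      exact continuous_finset_sum _ fun q _ => (((continuous_apply q).comp (hc2 i)).norm.pow 2)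
    have e4 : IsClosed {z : (Fin N → ℝ) × (Fin N → (Fin d × Fin d → ℂ)) |
        ρ = ∑ i, (z.1 i : ℂ) • proj (z.2 i)} := by
      refine isClosed_eq continuous_const ?_
      refine continuous_finset_sum _ fun i _ => Continuous.smul
        (f := fun z : (Fin N → ℝ) × (Fin N → (Fin d × Fin d → ℂ)) => (z.1 i : ℂ))
        (g := fun z => proj (z.2 i)) ?_ ?_
      · exact Complex.continuous_ofReal.comp (hc1 i)
      · exact continuous_proj'.comp (hc2 i)
    have heq : {z : (Fin N → ℝ) × (Fin N → (Fin d × Fin d → ℂ)) |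
        (∀ i, 0 ≤ z.1 i) ∧ (∑ i, z.1 i = 1) ∧ (∀ i, ∑ q, ‖z.2 i q‖ ^ 2 = 1) ∧
          ρ = ∑ i, (z.1 i : ℂ) • proj (z.2 i)}
        = {z | ∀ i, 0 ≤ z.1 i} ∩ ({z | ∑ i, z.1 i = 1} ∩
          ({z | ∀ i, ∑ q, ‖z.2 i q‖ ^ 2 = 1} ∩
            {z | ρ = ∑ i, (z.1 i : ℂ) • proj (z.2 i)})) := by
      ext z
      simp only [Set.mem_setOf_eq, Set.mem_inter_iff]
    rw [heq]
    exact e1.inter (e2.inter (e3.inter e4))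
  have hKcompact : IsCompact K := by
    have hsphere : IsCompact {ψ : Fin d × Fin d → ℂ | ∑ q, ‖ψ q‖ ^ 2 = 1} := by
      apply Metric.isCompact_of_isClosed_isBounded
      · exact isClosed_eq (continuous_finset_sum _ fun q _ =>
          ((continuous_apply q).norm.pow 2)) continuous_const
      · rw [isBounded_iff_forall_norm_le]
        refine ⟨1, fun ψ hψmem => ?_⟩
        rw [pi_norm_le_iff_of_nonneg zero_le_one]
        intro q
        have h1 := Finset.single_le_sum (f := fun q' => ‖ψ q'‖ ^ 2)
          (fun q' _ => sq_nonneg _) (Finset.mem_univ q)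
        have h2 : ∑ q', ‖ψ q'‖ ^ 2 = 1 := hψmem
        have h1' : ‖ψ q‖ ^ 2 ≤ ∑ q', ‖ψ q'‖ ^ 2 := h1
        nlinarith [norm_nonneg (ψ q), h1', h2]
    have hbox : IsCompact ((Set.univ.pi fun _ : Fin N => Set.Icc (0:ℝ) 1) ×ˢ
        (Set.univ.pi fun _ : Fin N => {ψ : Fin d × Fin d → ℂ | ∑ q, ‖ψ q‖ ^ 2 = 1})) :=
      (isCompact_univ_pi fun _ => isCompact_Icc).prod (isCompact_univ_pi fun _ => hsphere)
    refine hbox.of_isClosed_subset hKclosed ?_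
    rintro z ⟨hz0, hz1, hz2, _⟩
    refine Set.mem_prod.mpr ⟨?_, ?_⟩
    · rw [Set.mem_univ_pi]
      intro i
      refine ⟨hz0 i, ?_⟩
      rw [← hz1]
      exact Finset.single_le_sum (fun j _ => hz0 j) (Finset.mem_univ i)
    · rw [Set.mem_univ_pi]
      intro i
      exact hz2 i
  have hfcont : ContinuousOn f K := by
    rw [hf]
    apply continuousOn_finset_sum
    intro i _
    apply ContinuousOn.mul
    · exact (hc1 i).continuousOn
    · refine hcont.comp ((continuous_proj'.comp (hc2 i)).continuousOn) ?_
      intro z hz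
      exact ⟨z.2 i, hz.2.2.1 i, rfl⟩
  -- Step 5: minimize and shrink
  obtain ⟨zmin, hzminK, hmin⟩ := hKcompact.exists_isMinOn hKne hfcont
  obtain ⟨hz0, hz1, hz2, hz3⟩ := hzminK
  set t2 : Finset (Fin N) := Finset.univ.filter (fun i => zmin.1 i ≠ 0) with ht2
  set n : ℕ := t2.card with hn
  set e2' : Fin n ≃ {i // i ∈ t2} := t2.equivFin.symm with he2
  set pfin : Fin n → ℝ := fun j => zmin.1 (e2' j) with hpfin
  set ψfin : Fin n → (Fin d × Fin d → ℂ) := fun j => zmin.2 (e2' j) with hψfin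
  have hnN : n ≤ N := by
    rw [hn]
    calc t2.card ≤ Fintype.card (Fin N) := Finset.card_le_univ t2
    _ = N := Fintype.card_fin N
  have hpos : ∀ j, 0 < pfin j := by
    intro j
    have h1 : (e2' j : Fin N) ∈ t2 := (e2' j).2
    have h2 := Finset.mem_filter.mp h1
    exact lt_of_le_of_ne (hz0 _) (Ne.symm h2.2)
  have hsum1 : ∑ j, pfin j = 1 := by
    have hsh := sum_shrinkf zmin.1 zmin.1 (fun i hi => hi)
    rw [← hz1]
    exact hsh
  have hunits : ∀ j, ∑ q, ‖ψfin j q‖ ^ 2 = 1 := fun j => hz2 _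
  have hρn : ρ = ∑ j, (pfin j : ℂ) • proj (ψfin j) := by
    have hsh := sum_shrinkf zmin.1 (fun i => (zmin.1 i : ℂ) • proj (zmin.2 i))
      (fun i hi => by
        show (zmin.1 i : ℂ) • proj (zmin.2 i) = 0
        rw [hi]; simp)
    rw [hz3]
    exact hsh.symm
  have hval : ∑ j, pfin j * h (proj (ψfin j)) = f zmin := by
    have hsh := sum_shrinkf zmin.1 (fun i => zmin.1 i * h (proj (zmin.2 i)))
      (fun i hi => by
        show zmin.1 i * h (proj (zmin.2 i)) = 0
        rw [hi]; simp)
    exact hsh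
  have hvS : f zmin ∈ S := by
    rw [hS]
    exact ⟨n, pfin, ψfin, hpos, hsum1, hunits, hρn, hval.symm⟩
  have hlb : ∀ x ∈ S, f zmin ≤ x := by
    intro x hx
    obtain ⟨z, hzK, hfz⟩ := hQsub x hx
    calc f zmin ≤ f z := hmin hzK
    _ = x := hfz
  refine ⟨n, pfin, ψfin, hnN, hpos, hsum1, hunits, hρn, ?_⟩
  rw [hval]
  exact le_antisymm (le_csInf ⟨f zmin, hvS⟩ hlb)
    (csInf_le ⟨f zmin, fun x hx => hlb x hx⟩ hvS)
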